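/- Let G be an n-resource selection game with continuous (nondecreasing) cost functions f_1, …, f_n. Then there exists a consumption profile s in the restricted resource selection game on the resource set P_G — the game with cost functions (f_j)_{j∈P_G} and masses (μ^R)_{∅≠R⊆P_G} — such that h_j^s = h_G for every j ∈ P_G. -/

import Mathlib

open scoped NNReal

/-- `EqDistOn n f S t h`: the total mass `t` admits an equalizing distribution
among the functions `(f k)_{k ∈ S}` with common value `h`; when this holds, the
equalization `Eq⟨f_k : k ∈ S⟩(t)` is defined and equals `h`. -/
def EqDistOn (n : ℕ) (f : Fin n → ℝ≥0 → ℝ) (S : Finset (Fin n)) (t : ℝ≥0) (h : ℝ) : Prop :=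
  ∃ ν : Fin n → ℝ≥0, ∑ k ∈ S, ν k = t ∧ ∀ k ∈ S, f k (ν k) = h

/-- The total mass `Σ {μ R : ∅ ≠ R ⊆ S}` of the player types that may consume
only from resources in `S`. -/
def innerMass (n : ℕ) (μ : Finset (Fin n) → ℝ≥0) (S : Finset (Fin n)) : ℝ≥0 :=
  ∑ R ∈ S.powerset.filter (fun R => R.Nonempty), μ R

/-- The total mass `Σ {μ R : ∅ ≠ R ⊆ S, R ∩ S' ≠ ∅}` of the player types
within `S` that may consume from some resource of `S'`. -/
def touchMass (n : ℕ) (μ : Finset (Fin n) → ℝ≥0) (S S' : Finset (Fin n)) : ℝ≥0 :=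
  ∑ R ∈ S.powerset.filter (fun R => R.Nonempty ∧ (R ∩ S').Nonempty), μ R

/-- `MemD n f μ V S e`: the nonempty set `S` of resources of the game with
resource set `V` is an element of `D_G` with `E_G(S) = e`, i.e., `E_G(S)` is
defined and equals `e` and `M_G(S) = ∅` (for every nonempty `S' ⊆ S` there is
some `t ≤ touchMass S S'` whose equalization among `(f k)_{k ∈ S'}` is defined
and equals `e`). -/
def MemD (n : ℕ) (f : Fin n → ℝ≥0 → ℝ) (μ : Finset (Fin n) → ℝ≥0)
    (V : Finset (Fin n)) (S : Finset (Fin n)) (e : ℝ) : Prop :=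
  S.Nonempty ∧ S ⊆ V ∧ EqDistOn n f S (innerMass n μ S) e ∧
  ∀ S' ⊆ S, S'.Nonempty → ∃ t ≤ touchMass n μ S S', EqDistOn n f S' t e

/-- `IsHG n f μ V h`: `h` is the maximum `h_G = max_{S ∈ D_G} E_G(S)` of the
game with cost functions `f`, masses `μ` and resource set `V`. -/
def IsHG (n : ℕ) (f : Fin n → ℝ≥0 → ℝ) (μ : Finset (Fin n) → ℝ≥0)
    (V : Finset (Fin n)) (h : ℝ) : Prop :=
  (∃ S, MemD n f μ V S h) ∧ ∀ S e, MemD n f μ V S e → e ≤ h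

/-- For continuous (nondecreasing) cost functions there is a
consumption profile of the restricted game on the resource set `P_G` — only the
types contained in `P_G` participate, each distributing its mass within its
type — in which the cost of every resource of `P_G` is `h_G`. -/
noncomputable def pF (f : ℝ≥0 → ℝ) : ℝ → ℝ := fun x => ∫ t in (0:ℝ)..x, f t.toNNReal

lemma pg_cont {f : ℝ≥0 → ℝ} (hf : Continuous f) : Continuous fun t : ℝ => f t.toNNReal :=
  hf.comp continuous_real_toNNReal

lemma pF_cont {f : ℝ≥0 → ℝ} (hf : Continuous f) : Continuous (pF f) :=
  intervalIntegral.continuous_primitive (fun a b => (pg_cont hf).intervalIntegrable a b) 0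

lemma pF_diff {f : ℝ≥0 → ℝ} (hf : Continuous f) (a b : ℝ) :
    pF f b - pF f a = ∫ t in a..b, f t.toNNReal := by
  have := intervalIntegral.integral_add_adjacent_intervals (μ := MeasureTheory.volume)
    ((pg_cont hf).intervalIntegrable 0 a) ((pg_cont hf).intervalIntegrable a b)
  unfold pF
  linarith

lemma pF_upper {f : ℝ≥0 → ℝ} (hf : Continuous f) (hm : Monotone f) {a b : ℝ} (hab : a ≤ b) :
    pF f b - pF f a ≤ (b - a) * f b.toNNReal := by
  rw [pF_diff hf]
  have := intervalIntegral.integral_mono_on (μ := MeasureTheory.volume) hab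
    ((pg_cont hf).intervalIntegrable a b) (intervalIntegrable_const (c := f b.toNNReal))
    (fun x hx => hm (Real.toNNReal_mono hx.2))
  simpa [mul_comm] using this

lemma pF_lower {f : ℝ≥0 → ℝ} (hf : Continuous f) (hm : Monotone f) {a b : ℝ} (hab : a ≤ b) :
    (b - a) * f a.toNNReal ≤ pF f b - pF f a := by
  rw [pF_diff hf]
  have := intervalIntegral.integral_mono_on (μ := MeasureTheory.volume) hab
    (intervalIntegrable_const (c := f a.toNNReal)) ((pg_cont hf).intervalIntegrable a b)
    (fun x hx => hm (Real.toNNReal_mono hx.1))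
  simpa [mul_comm] using this

lemma small_eps (h : ℝ≥0 → ℝ) (hc : Continuous h) (hpos : 0 < h 0) (c : ℝ≥0) (hcpos : 0 < c) :
    ∃ ε : ℝ≥0, 0 < ε ∧ ε ≤ c ∧ 0 < h ε := by
  have : ∀ᶠ ε in nhds (0:ℝ≥0), 0 < h ε := (hc.tendsto 0).eventually_const_lt hpos
  obtain ⟨δ, hδ, hδ'⟩ := Metric.eventually_nhds_iff.1 this
  refine ⟨min (δ/2).toNNReal c, ?_, min_le_right _ _, hδ' ?_⟩
  · simp [lt_min_iff, hcpos, Real.toNNReal_pos, hδ]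
  · rw [NNReal.dist_eq]
    have h1 : ((min (δ/2).toNNReal c : ℝ≥0) : ℝ) ≤ ((δ/2).toNNReal : ℝ) := by
      exact_mod_cast min_le_left _ _
    have h2 : ((δ/2).toNNReal : ℝ) ≤ δ/2 := by
      rw [Real.coe_toNNReal _ (by positivity)]
    rw [abs_of_nonneg (by simp)]
    simp only [NNReal.coe_zero, sub_zero] at *
    linarith

theorem liquid_distribution_under_PG (n : ℕ) (f : Fin n → ℝ≥0 → ℝ)
    (μ : Finset (Fin n) → ℝ≥0)
    (hmono : ∀ j, Monotone (f j)) (hcont : ∀ j, Continuous (f j))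
    (hG : ℝ) (hhG : IsHG n f μ Finset.univ hG)
    (PG : Finset (Fin n))
    (hPG : ∀ j : Fin n, j ∈ PG ↔ ∃ S, MemD n f μ Finset.univ S hG ∧ j ∈ S) :
    ∃ s : Finset (Fin n) → Fin n → ℝ≥0,
      (∀ R : Finset (Fin n), ∀ j : Fin n, j ∉ R → s R j = 0) ∧
      (∀ R : Finset (Fin n), R.Nonempty → R ⊆ PG → ∑ j ∈ R, s R j = μ R) ∧
      (∀ R : Finset (Fin n), ¬ R ⊆ PG → ∀ j : Fin n, s R j = 0) ∧
      (∀ j ∈ PG, f j (∑ R : Finset (Fin n), s R j) = hG) := by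
  classical
  -- the compact set of profiles of the restricted game, and the Rosenthal potential
  obtain ⟨s, ⟨hs1, hs2, hs3⟩, hmin⟩ :
      ∃ s : Finset (Fin n) → Fin n → ℝ≥0,
        ((∀ R j, j ∉ R → s R j = 0) ∧
         (∀ R, ¬(R.Nonempty ∧ R ⊆ PG) → ∀ j, s R j = 0) ∧
         (∀ R, R.Nonempty → R ⊆ PG → ∑ j ∈ R, s R j = μ R)) ∧
        ∀ s' : Finset (Fin n) → Fin n → ℝ≥0,
          ((∀ R j, j ∉ R → s' R j = 0) ∧
           (∀ R, ¬(R.Nonempty ∧ R ⊆ PG) → ∀ j, s' R j = 0) ∧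
           (∀ R, R.Nonempty → R ⊆ PG → ∑ j ∈ R, s' R j = μ R)) →
          (∑ j ∈ PG, pF (f j) ((∑ R : Finset (Fin n), s R j : ℝ≥0) : ℝ)) ≤
            ∑ j ∈ PG, pF (f j) ((∑ R : Finset (Fin n), s' R j : ℝ≥0) : ℝ) := by
    set K : Set (Finset (Fin n) → Fin n → ℝ≥0) :=
      {s | (∀ R j, j ∉ R → s R j = 0) ∧
           (∀ R, ¬(R.Nonempty ∧ R ⊆ PG) → ∀ j, s R j = 0) ∧
           (∀ R, R.Nonempty → R ⊆ PG → ∑ j ∈ R, s R j = μ R)} with hKdef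
    have hKne : K.Nonempty := by
      refine ⟨fun R j => if hR : R.Nonempty ∧ R ⊆ PG then (if j = R.min' hR.1 then μ R else 0)
        else 0, ?_, ?_, ?_⟩
      · intro R j hj
        dsimp only
        by_cases hR : R.Nonempty ∧ R ⊆ PG
        · rw [dif_pos hR, if_neg]
          rintro rfl
          exact hj (R.min'_mem hR.1)
        · rw [dif_neg hR]
      · intro R hR j
        exact dif_neg hR
      · intro R hRne hRPG
        have : ∀ j ∈ R, (if hR : R.Nonempty ∧ R ⊆ PG then
            (if j = R.min' hR.1 then μ R else 0) else 0) =
            (if j = R.min' hRne then μ R else 0) := by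
          intro j _
          rw [dif_pos ⟨hRne, hRPG⟩]
        rw [Finset.sum_congr rfl this, Finset.sum_ite_eq' R _ fun _ => μ R,
          if_pos (R.min'_mem hRne)]
    have hKclosed : IsClosed K := by
      rw [hKdef]
      have e1 : IsClosed {s : Finset (Fin n) → Fin n → ℝ≥0 | ∀ R j, j ∉ R → s R j = 0} := by
        have : {s : Finset (Fin n) → Fin n → ℝ≥0 | ∀ R j, j ∉ R → s R j = 0} =
            ⋂ (R : Finset (Fin n)) (j : Fin n),
              {s : Finset (Fin n) → Fin n → ℝ≥0 | j ∉ R → s R j = 0} := by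
          ext s; simp [Set.mem_iInter]
        rw [this]
        refine isClosed_iInter fun R => isClosed_iInter fun j => ?_
        by_cases hj : j ∈ R
        · simp only [hj, not_true_eq_false]
          simp
        · have : {s : Finset (Fin n) → Fin n → ℝ≥0 | j ∉ R → s R j = 0} =
              {s : Finset (Fin n) → Fin n → ℝ≥0 | s R j = 0} := by
            ext s; simp [hj]
          rw [this]
          exact isClosed_eq ((continuous_apply j).comp (continuous_apply R)) continuous_const
      have e2 : IsClosed {s : Finset (Fin n) → Fin n → ℝ≥0 |
          ∀ R, ¬(R.Nonempty ∧ R ⊆ PG) → ∀ j, s R j = 0} := by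
        have : {s : Finset (Fin n) → Fin n → ℝ≥0 | ∀ R, ¬(R.Nonempty ∧ R ⊆ PG) → ∀ j, s R j = 0} =
            ⋂ (R : Finset (Fin n)) (j : Fin n),
              {s : Finset (Fin n) → Fin n → ℝ≥0 | ¬(R.Nonempty ∧ R ⊆ PG) → s R j = 0} := by
          ext s; simp [Set.mem_iInter]; tauto
        rw [this]
        refine isClosed_iInter fun R => isClosed_iInter fun j => ?_
        by_cases hR : R.Nonempty ∧ R ⊆ PG
        · simp only [hR, not_true_eq_false]
          simp
        · have : {s : Finset (Fin n) → Fin n → ℝ≥0 | ¬(R.Nonempty ∧ R ⊆ PG) → s R j = 0} =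
              {s : Finset (Fin n) → Fin n → ℝ≥0 | s R j = 0} := by
            ext s; simp [hR]
          rw [this]
          exact isClosed_eq ((continuous_apply j).comp (continuous_apply R)) continuous_const
      have e3 : IsClosed {s : Finset (Fin n) → Fin n → ℝ≥0 |
          ∀ R, R.Nonempty → R ⊆ PG → ∑ j ∈ R, s R j = μ R} := by
        have : {s : Finset (Fin n) → Fin n → ℝ≥0 | ∀ R, R.Nonempty → R ⊆ PG →
            ∑ j ∈ R, s R j = μ R} =
            ⋂ (R : Finset (Fin n)),
              {s : Finset (Fin n) → Fin n → ℝ≥0 | R.Nonempty → R ⊆ PG → ∑ j ∈ R, s R j = μ R} := by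
          ext s; simp [Set.mem_iInter]
        rw [this]
        refine isClosed_iInter fun R => ?_
        by_cases hR : R.Nonempty ∧ R ⊆ PG
        · have : {s : Finset (Fin n) → Fin n → ℝ≥0 | R.Nonempty → R ⊆ PG →
              ∑ j ∈ R, s R j = μ R} =
              {s : Finset (Fin n) → Fin n → ℝ≥0 | ∑ j ∈ R, s R j = μ R} := by
            ext s; simp [hR.1, hR.2]
          rw [this]
          exact isClosed_eq (continuous_finset_sum _ fun j _ =>
            (continuous_apply j).comp (continuous_apply R)) continuous_const
        · have : {s : Finset (Fin n) → Fin n → ℝ≥0 | R.Nonempty → R ⊆ PG →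
              ∑ j ∈ R, s R j = μ R} = Set.univ := by
            ext s
            simp only [Set.mem_setOf_eq, Set.mem_univ, iff_true]
            intro h1 h2
            exact absurd ⟨h1, h2⟩ hR
          rw [this]
          exact isClosed_univ
      exact e1.inter (e2.inter e3)
    have hKsub : K ⊆ Set.univ.pi fun R => Set.univ.pi fun _j : Fin n => Set.Icc 0 (μ R) := by
      intro s hs
      obtain ⟨h1, h2, h3⟩ := hs
      simp only [Set.mem_pi, Set.mem_univ, true_implies, Set.mem_Icc]
      intro R j
      refine ⟨zero_le, ?_⟩
      by_cases hR : R.Nonempty ∧ R ⊆ PG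
      · by_cases hj : j ∈ R
        · rw [← h3 R hR.1 hR.2]
          exact Finset.single_le_sum (fun i _ => zero_le) hj
        · rw [h1 R j hj]
          exact zero_le
      · rw [h2 R hR j]
        exact zero_le
    have hKcomp : IsCompact K :=
      (isCompact_univ_pi fun R => isCompact_univ_pi fun _j => isCompact_Icc).of_isClosed_subset
        hKclosed hKsub
    have hcontPhi : Continuous fun s : Finset (Fin n) → Fin n → ℝ≥0 =>
        ∑ j ∈ PG, pF (f j) ((∑ R : Finset (Fin n), s R j : ℝ≥0) : ℝ) :=
      continuous_finset_sum _ fun j _ =>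
        (pF_cont (hcont j)).comp (NNReal.continuous_coe.comp
          (continuous_finset_sum _ fun R _ => (continuous_apply j).comp (continuous_apply R)))
    obtain ⟨s, hsK, hminOn⟩ := hKcomp.exists_isMinOn hKne hcontPhi.continuousOn
    exact ⟨s, hsK, fun s' hs' => hminOn hs'⟩
  set L : Fin n → ℝ≥0 := fun j => ∑ R : Finset (Fin n), s R j with hLdef
  -- the Wardrop/equilibrium property of the minimizer
  have wardrop : ∀ R : Finset (Fin n), ∀ j ∈ R, ∀ k ∈ R, s R j ≠ 0 →
      f j (L j) ≤ f k (L k) := by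
    intro R j hjR k hkR hsRj
    by_contra hlt
    push_neg at hlt
    have hRgood : R.Nonempty ∧ R ⊆ PG := by
      by_contra hbad
      exact hsRj (hs2 R hbad j)
    have hjk : j ≠ k := by
      rintro rfl
      exact lt_irrefl _ hlt
    have hjPG : j ∈ PG := hRgood.2 hjR
    have hkPG : k ∈ PG := hRgood.2 hkR
    have hsRjpos : 0 < s R j := pos_iff_ne_zero.2 hsRj
    -- choose a small positive ε
    have hh : Continuous fun ε : ℝ≥0 => f j (L j - ε) - f k (L k + ε) := by
      apply Continuous.sub
      · exact (hcont j).comp (continuous_const.sub continuous_id)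
      · exact (hcont k).comp (continuous_const.add continuous_id)
    have h0 : 0 < f j (L j - 0) - f k (L k + 0) := by
      simpa using sub_pos.mpr hlt
    obtain ⟨ε, hε0, hεle, hεh⟩ := small_eps _ hh h0 (s R j) hsRjpos
    have hεLj : ε ≤ L j := by
      refine hεle.trans ?_
      exact Finset.single_le_sum (f := fun R' => s R' j) (fun i _ => zero_le)
        (Finset.mem_univ R)
    -- the modified profile
    set s' : Finset (Fin n) → Fin n → ℝ≥0 := Function.update s R
        (Function.update (Function.update (s R) j (s R j - ε)) k (s R k + ε)) with hs'def
    have hs'ne : ∀ R' : Finset (Fin n), R' ≠ R → s' R' = s R' := fun R' h =>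
      Function.update_of_ne h _ _
    have hs'R : s' R = Function.update (Function.update (s R) j (s R j - ε)) k
        (s R k + ε) := Function.update_self _ _ _
    have hs'Rj : s' R j = s R j - ε := by
      rw [hs'R, Function.update_of_ne hjk, Function.update_self]
    have hs'Rk : s' R k = s R k + ε := by
      rw [hs'R, Function.update_self]
    have hs'Ro : ∀ x, x ≠ j → x ≠ k → s' R x = s R x := by
      intro x hxj hxk
      rw [hs'R, Function.update_of_ne hxk, Function.update_of_ne hxj]
    -- load changes
    have hload : ∀ x, ∀ t : Finset (Fin n) → Fin n → ℝ≥0,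
        ∑ R' : Finset (Fin n), t R' x = t R x + ∑ R' ∈ Finset.univ.erase R, t R' x :=
      fun x t => (Finset.add_sum_erase _ _ (Finset.mem_univ R)).symm
    have heq : ∀ x, ∑ R' ∈ Finset.univ.erase R, s' R' x = ∑ R' ∈ Finset.univ.erase R, s R' x := by
      intro x
      refine Finset.sum_congr rfl fun R' hR' => ?_
      rw [hs'ne R' (Finset.ne_of_mem_erase hR')]
    have hL'j : (∑ R' : Finset (Fin n), s' R' j) = L j - ε := by
      rw [hload j s', heq j, hs'Rj, hLdef]
      dsimp only
      rw [hload j s]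
      rw [tsub_add_eq_add_tsub hεle]
    have hL'k : (∑ R' : Finset (Fin n), s' R' k) = L k + ε := by
      rw [hload k s', heq k, hs'Rk, hLdef]
      dsimp only
      rw [hload k s]
      ring
    have hL'o : ∀ x, x ≠ j → x ≠ k → (∑ R' : Finset (Fin n), s' R' x) = L x := by
      intro x hxj hxk
      rw [hload x s', heq x, hs'Ro x hxj hxk, hLdef]
      dsimp only
      rw [hload x s]
    -- s' is a valid profile
    have hs'K : (∀ R' j', j' ∉ R' → s' R' j' = 0) ∧
        (∀ R', ¬(R'.Nonempty ∧ R' ⊆ PG) → ∀ j', s' R' j' = 0) ∧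
        (∀ R', R'.Nonempty → R' ⊆ PG → ∑ j' ∈ R', s' R' j' = μ R') := by
      refine ⟨?_, ?_, ?_⟩
      · intro R' j' hj'
        by_cases hR' : R' = R
        · subst hR'
          have hj'j : j' ≠ j := fun h => hj' (h ▸ hjR)
          have hj'k : j' ≠ k := fun h => hj' (h ▸ hkR)
          rw [hs'Ro j' hj'j hj'k]
          exact hs1 R' j' hj'
        · rw [hs'ne R' hR']
          exact hs1 R' j' hj'
      · intro R' hbad j'
        have hR' : R' ≠ R := fun h => hbad (h ▸ hRgood)
        rw [hs'ne R' hR']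
        exact hs2 R' hbad j'
      · intro R' hR'ne hR'PG
        by_cases hR' : R' = R
        · subst hR'
          rw [hs'R, Finset.sum_update_of_mem hkR]
          have hjmem : j ∈ R' \ {k} := Finset.mem_sdiff.2 ⟨hjR, by simp [hjk]⟩
          rw [Finset.sum_update_of_mem hjmem]
          have horig : ∑ j' ∈ R', s R' j' = s R' k + (s R' j +
              ∑ x ∈ (R' \ {k}) \ {j}, s R' x) := by
            rw [Finset.sum_eq_add_sum_sdiff_singleton_of_mem hkR, Finset.sum_eq_add_sum_sdiff_singleton_of_mem hjmem]
          rw [← hs3 R' hR'ne hR'PG, horig]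
          have h1 : s R' j - ε + ε = s R' j := tsub_add_cancel_of_le hεle
          calc s R' k + ε + (s R' j - ε + ∑ x ∈ (R' \ {k}) \ {j}, s R' x)
              = s R' k + ((s R' j - ε + ε) + ∑ x ∈ (R' \ {k}) \ {j}, s R' x) := by ring
            _ = s R' k + (s R' j + ∑ x ∈ (R' \ {k}) \ {j}, s R' x) := by rw [h1]
        · rw [hs'ne R' hR']
          exact hs3 R' hR'ne hR'PG
    have hminle := hmin s' hs'K
    -- but the potential strictly decreased
    have hcoejsub : ((L j - ε : ℝ≥0) : ℝ) = (L j : ℝ) - (ε : ℝ) := NNReal.coe_sub hεLj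
    have hdj : pF (f j) ((L j - ε : ℝ≥0) : ℝ) - pF (f j) ((L j : ℝ≥0) : ℝ) ≤
        -((ε : ℝ) * f j (L j - ε)) := by
      have hab : ((L j - ε : ℝ≥0) : ℝ) ≤ ((L j : ℝ≥0) : ℝ) := by
        exact_mod_cast tsub_le_self
      have := pF_lower (hcont j) (hmono j) hab
      have hta : ((L j - ε : ℝ≥0) : ℝ).toNNReal = L j - ε := Real.toNNReal_coe
      rw [hta] at this
      have hba : ((L j : ℝ≥0) : ℝ) - ((L j - ε : ℝ≥0) : ℝ) = (ε : ℝ) := by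
        rw [hcoejsub]; ring
      rw [hba] at this
      linarith
    have hdk : pF (f k) ((L k + ε : ℝ≥0) : ℝ) - pF (f k) ((L k : ℝ≥0) : ℝ) ≤
        (ε : ℝ) * f k (L k + ε) := by
      have hab : ((L k : ℝ≥0) : ℝ) ≤ ((L k + ε : ℝ≥0) : ℝ) := by
        exact_mod_cast le_self_add
      have := pF_upper (hcont k) (hmono k) hab
      have hta : ((L k + ε : ℝ≥0) : ℝ).toNNReal = L k + ε := Real.toNNReal_coe
      rw [hta] at this
      have hba : ((L k + ε : ℝ≥0) : ℝ) - ((L k : ℝ≥0) : ℝ) = (ε : ℝ) := by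
        push_cast; ring
      rw [hba] at this
      linarith
    have hsplit : (∑ j' ∈ PG, pF (f j') ((∑ R' : Finset (Fin n), s' R' j' : ℝ≥0) : ℝ)) -
        (∑ j' ∈ PG, pF (f j') ((∑ R' : Finset (Fin n), s R' j' : ℝ≥0) : ℝ)) =
        ∑ j' ∈ PG, (pF (f j') ((∑ R' : Finset (Fin n), s' R' j' : ℝ≥0) : ℝ) -
          pF (f j') ((∑ R' : Finset (Fin n), s R' j' : ℝ≥0) : ℝ)) := by
      rw [Finset.sum_sub_distrib]
    have hpair : ∑ j' ∈ PG, (pF (f j') ((∑ R' : Finset (Fin n), s' R' j' : ℝ≥0) : ℝ) -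
          pF (f j') ((∑ R' : Finset (Fin n), s R' j' : ℝ≥0) : ℝ)) =
        (pF (f j) ((L j - ε : ℝ≥0) : ℝ) - pF (f j) ((L j : ℝ≥0) : ℝ)) +
        (pF (f k) ((L k + ε : ℝ≥0) : ℝ) - pF (f k) ((L k : ℝ≥0) : ℝ)) := by
      rw [← Finset.sum_subset (Finset.insert_subset hjPG (Finset.singleton_subset_iff.2 hkPG))
        (f := fun j' => pF (f j') ((∑ R' : Finset (Fin n), s' R' j' : ℝ≥0) : ℝ) -
          pF (f j') ((∑ R' : Finset (Fin n), s R' j' : ℝ≥0) : ℝ))]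
      · rw [Finset.sum_pair hjk, hL'j, hL'k]
      · intro x hxPG hxnot
        simp only [Finset.mem_insert, Finset.mem_singleton] at hxnot
        push_neg at hxnot
        rw [hL'o x hxnot.1 hxnot.2]
        have : (∑ R' : Finset (Fin n), s R' x) = L x := rfl
        rw [this, sub_self]
    have hstrict : (∑ j' ∈ PG, pF (f j') ((∑ R' : Finset (Fin n), s' R' j' : ℝ≥0) : ℝ)) <
        ∑ j' ∈ PG, pF (f j') ((∑ R' : Finset (Fin n), s R' j' : ℝ≥0) : ℝ) := by
      have hε0' : (0:ℝ) < (ε : ℝ) := by exact_mod_cast hε0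
      have hgap : (ε : ℝ) * f k (L k + ε) < (ε : ℝ) * f j (L j - ε) := by
        apply mul_lt_mul_of_pos_left _ hε0'
        linarith [hεh]
      have := hsplit
      nlinarith [hdj, hdk, hpair, hsplit]
    exact absurd hminle (not_le.2 hstrict)
  -- P_G is nonempty
  obtain ⟨S₀, hS₀⟩ := hhG.1
  obtain ⟨j₀, hj₀⟩ := hS₀.1
  have hPGne : PG.Nonempty := ⟨j₀, (hPG j₀).2 ⟨S₀, hS₀, hj₀⟩⟩
  -- the top level set of the equilibrium
  obtain ⟨jM, hjMPG, hjMmax⟩ := PG.exists_max_image (fun j' => f j' (L j')) hPGne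
  set e : ℝ := f jM (L jM) with hedef
  set W : Finset (Fin n) := PG.filter (fun j' => f j' (L j') = e) with hWdef
  have hWPG : W ⊆ PG := Finset.filter_subset _ _
  have htop : ∀ (R : Finset (Fin n)) (j' k' : Fin n), s R j' ≠ 0 → j' ∈ W → k' ∈ R →
      k' ∈ W := by
    intro R j' k' hne hj'W hk'R
    have hRgood : R.Nonempty ∧ R ⊆ PG := by
      by_contra hbad
      exact hne (hs2 R hbad j')
    have hj'R : j' ∈ R := by
      by_contra h
      exact hne (hs1 R j' h)
    have hW := wardrop R j' hj'R k' hk'R hne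
    have hj'e : f j' (L j') = e := (Finset.mem_filter.1 hj'W).2
    have hk'PG : k' ∈ PG := hRgood.2 hk'R
    have : f k' (L k') = e := le_antisymm (hjMmax k' hk'PG) (hj'e ▸ hW)
    exact Finset.mem_filter.2 ⟨hk'PG, this⟩
  -- mass entering the top set
  have haW : ∑ j' ∈ W, L j' = innerMass n μ W := by
    have h1 : ∑ j' ∈ W, L j' = ∑ R : Finset (Fin n), ∑ j' ∈ W, s R j' := by
      rw [hLdef]
      exact Finset.sum_comm
    rw [h1, innerMass]
    rw [← Finset.sum_subset (Finset.subset_univ (W.powerset.filter (fun R => R.Nonempty)))]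
    · refine Finset.sum_congr rfl fun R hR => ?_
      rw [Finset.mem_filter, Finset.mem_powerset] at hR
      have hRPG : R ⊆ PG := hR.1.trans hWPG
      rw [← hs3 R hR.2 hRPG]
      exact (Finset.sum_subset hR.1 (fun x _ hxR => hs1 R x hxR)).symm
    · intro R _ hRnot
      rw [Finset.mem_filter, Finset.mem_powerset] at hRnot
      push_neg at hRnot
      refine Finset.sum_eq_zero fun j' hj'W => ?_
      by_contra hne
      have hj'R : j' ∈ R := by
        by_contra h
        exact hne (hs1 R j' h)
      have hRW : R ⊆ W := fun k' hk'R => htop R j' k' hne hj'W hk'R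
      exact absurd (hRnot hRW) (Finset.nonempty_iff_ne_empty.1 ⟨j', hj'R⟩)
  -- mass entering subsets of the top set
  have hbW : ∀ S' ⊆ W, ∑ j' ∈ S', L j' ≤ touchMass n μ W S' := by
    intro S' hS'W
    have h1 : ∑ j' ∈ S', L j' = ∑ R : Finset (Fin n), ∑ j' ∈ S', s R j' := by
      rw [hLdef]
      exact Finset.sum_comm
    rw [h1, touchMass]
    have h2 : ∑ R : Finset (Fin n), ∑ j' ∈ S', s R j' =
        ∑ R ∈ W.powerset.filter (fun R => R.Nonempty ∧ (R ∩ S').Nonempty),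
          ∑ j' ∈ S', s R j' := by
      rw [← Finset.sum_subset (Finset.subset_univ _)]
      intro R _ hRnot
      rw [Finset.mem_filter, Finset.mem_powerset] at hRnot
      push_neg at hRnot
      refine Finset.sum_eq_zero fun j' hj'S' => ?_
      by_contra hne
      have hj'R : j' ∈ R := by
        by_contra h
        exact hne (hs1 R j' h)
      have hj'W : j' ∈ W := hS'W hj'S'
      have hRW : R ⊆ W := fun k' hk'R => htop R j' k' hne hj'W hk'R
      exact absurd (hRnot hRW ⟨j', hj'R⟩) (Finset.nonempty_iff_ne_empty.1 ⟨j', Finset.mem_inter.2 ⟨hj'R, hj'S'⟩⟩)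
    rw [h2]
    refine Finset.sum_le_sum fun R hR => ?_
    rw [Finset.mem_filter, Finset.mem_powerset] at hR
    have hRPG : R ⊆ PG := hR.1.trans hWPG
    calc ∑ j' ∈ S', s R j' ≤ ∑ j' ∈ S' ∪ R, s R j' :=
          Finset.sum_le_sum_of_subset Finset.subset_union_left
      _ = ∑ j' ∈ R, s R j' :=
          (Finset.sum_subset Finset.subset_union_right (fun x _ hxR => hs1 R x hxR)).symm
      _ = μ R := hs3 R hR.2.1 hRPG
  -- the top level set is a member of D_G
  have hMemDW : MemD n f μ Finset.univ W e := by
    refine ⟨⟨jM, Finset.mem_filter.2 ⟨hjMPG, rfl⟩⟩, Finset.subset_univ _,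
      ⟨fun k => if k ∈ W then L k else 0, ?_, ?_⟩, ?_⟩
    · rw [← haW]
      exact Finset.sum_congr rfl fun k hk => if_pos hk
    · intro k hk
      show f k (if k ∈ W then L k else 0) = e
      rw [if_pos hk]
      exact (Finset.mem_filter.1 hk).2
    · intro S' hS'W hS'ne
      refine ⟨∑ j' ∈ S', L j', hbW S' hS'W, fun k => if k ∈ W then L k else 0, ?_, ?_⟩
      · exact Finset.sum_congr rfl fun k hk => if_pos (hS'W hk)
      · intro k hk
        show f k (if k ∈ W then L k else 0) = e
        rw [if_pos (hS'W hk)]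
        exact (Finset.mem_filter.1 (hS'W hk)).2
  have he_le : e ≤ hG := hhG.2 W e hMemDW
  -- the bottom level
  obtain ⟨jm, hjmPG, hjmmin⟩ := PG.exists_min_image (fun j' => f j' (L j')) hPGne
  set e' : ℝ := f jm (L jm) with he'def
  have hge : hG ≤ e' := by
    by_contra hlt'
    push_neg at hlt'
    set W' : Finset (Fin n) := PG.filter (fun j' => f j' (L j') = e') with hW'def
    obtain ⟨S, hS, hjmS⟩ := (hPG jm).1 hjmPG
    have hSPG : S ⊆ PG := fun k hk => (hPG k).2 ⟨S, hS, hk⟩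
    set S' : Finset (Fin n) := S ∩ W' with hS'def
    have hjmS' : jm ∈ S' := Finset.mem_inter.2 ⟨hjmS, Finset.mem_filter.2 ⟨hjmPG, rfl⟩⟩
    obtain ⟨t, ht, ν, hν1, hν2⟩ := hS.2.2.2 S' Finset.inter_subset_left ⟨jm, hjmS'⟩
    have hbot : ∀ (R : Finset (Fin n)) (j' : Fin n), s R j' ≠ 0 → (R ∩ W').Nonempty →
        j' ∈ W' := by
      intro R j' hne hRW'
      have hRgood : R.Nonempty ∧ R ⊆ PG := by
        by_contra hbad
        exact hne (hs2 R hbad j')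
      have hj'R : j' ∈ R := by
        by_contra h
        exact hne (hs1 R j' h)
      obtain ⟨k₀, hk₀⟩ := hRW'
      rw [Finset.mem_inter] at hk₀
      have hWd := wardrop R j' hj'R k₀ hk₀.1 hne
      have hk₀e : f k₀ (L k₀) = e' := (Finset.mem_filter.1 hk₀.2).2
      have hj'PG : j' ∈ PG := hRgood.2 hj'R
      have : f j' (L j') = e' := le_antisymm (hk₀e ▸ hWd) (hjmmin j' hj'PG)
      exact Finset.mem_filter.2 ⟨hj'PG, this⟩
    -- all the touching mass is dumped into S'
    have htouch : touchMass n μ S S' ≤ ∑ j' ∈ S', L j' := by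
      have h1 : ∑ j' ∈ S', L j' = ∑ R : Finset (Fin n), ∑ j' ∈ S', s R j' := by
        rw [hLdef]
        exact Finset.sum_comm
      rw [h1, touchMass]
      have h2 : ∀ R ∈ S.powerset.filter (fun R => R.Nonempty ∧ (R ∩ S').Nonempty),
          μ R = ∑ j' ∈ S', s R j' := by
        intro R hR
        rw [Finset.mem_filter, Finset.mem_powerset] at hR
        have hRPG : R ⊆ PG := hR.1.trans hSPG
        have hsupp : ∀ x, s R x ≠ 0 → x ∈ R ∩ S' := by
          intro x hx
          have hxR : x ∈ R := by
            by_contra h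
            exact hx (hs1 R x h)
          have hRW' : (R ∩ W').Nonempty := by
            obtain ⟨y, hy⟩ := hR.2.2
            rw [Finset.mem_inter] at hy
            exact ⟨y, Finset.mem_inter.2 ⟨hy.1, (Finset.mem_inter.1 hy.2).2⟩⟩
          have hxW' : x ∈ W' := hbot R x hx hRW'
          exact Finset.mem_inter.2 ⟨hxR, Finset.mem_inter.2 ⟨hR.1 hxR, hxW'⟩⟩
        have e1 : ∑ j' ∈ R ∩ S', s R j' = ∑ j' ∈ R, s R j' :=
          Finset.sum_subset Finset.inter_subset_left (fun x hxR hxn => by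
            by_contra hne
            exact hxn (hsupp x hne))
        have e2 : ∑ j' ∈ R ∩ S', s R j' = ∑ j' ∈ S', s R j' :=
          Finset.sum_subset Finset.inter_subset_right (fun x _ hxn => by
            by_contra hne
            exact hxn (hsupp x hne))
        rw [← e2, e1, hs3 R hR.2.1 hRPG]
      calc ∑ R ∈ S.powerset.filter (fun R => R.Nonempty ∧ (R ∩ S').Nonempty), μ R
          = ∑ R ∈ S.powerset.filter (fun R => R.Nonempty ∧ (R ∩ S').Nonempty),
              ∑ j' ∈ S', s R j' := Finset.sum_congr rfl h2
        _ ≤ ∑ R : Finset (Fin n), ∑ j' ∈ S', s R j' :=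
              Finset.sum_le_sum_of_subset (Finset.subset_univ _)
    have hstrict2 : ∑ j' ∈ S', L j' < ∑ k ∈ S', ν k := by
      refine Finset.sum_lt_sum_of_nonempty ⟨jm, hjmS'⟩ fun k hk => ?_
      have hke' : f k (L k) = e' := (Finset.mem_filter.1 (Finset.mem_inter.1 hk).2).2
      have hkhG : f k (ν k) = hG := hν2 k hk
      by_contra hc
      push_neg at hc
      have := hmono k hc
      rw [hkhG, hke'] at this
      exact absurd (this.trans_lt hlt') (lt_irrefl _)
    rw [hν1] at hstrict2
    exact absurd ((ht.trans htouch).trans_lt hstrict2) (lt_irrefl _)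
  -- conclusion
  refine ⟨s, hs1, hs3, fun R hR j' => hs2 R (fun hc => hR hc.2) j', fun j hjPG => ?_⟩
  have h1 : f j (L j) ≤ e := hjMmax j hjPG
  have h2 : e' ≤ f j (L j) := hjmmin j hjPG
  have : f j (L j) = hG := le_antisymm (h1.trans he_le) (hge.trans h2)
  rw [hLdef] at this
  exact this
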